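/- Let A and B be real symmetric n×n matrices. If I_≽(A,B) is a single-point set, i.e., there is exactly one σ ∈ ℝ with A + σB positive semidefinite, then B is indefinite (there exist vectors v₁, v₂ with v₁ᵀBv₁ > 0 and v₂ᵀBv₂ < 0) and I_≻(A,B) = ∅ (there is no σ ∈ ℝ with A + σB positive definite). -/

import Mathlib

open Matrix

lemma herm_of_symm {n : ℕ} {B : Matrix (Fin n) (Fin n) ℝ} (hB : B.IsSymm) :
    B.IsHermitian := by
  ext i j
  rw [conjTranspose_apply, star_trivial]
  exact hB.apply i j

lemma quad_cont {n : ℕ} (M : Matrix (Fin n) (Fin n) ℝ) :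
    Continuous fun x : Fin n → ℝ => x ⬝ᵥ M *ᵥ x := by
  simp only [dotProduct, mulVec]
  fun_prop

lemma quad_smul {n : ℕ} (M : Matrix (Fin n) (Fin n) ℝ) (a : ℝ) (x : Fin n → ℝ) :
    (a • x) ⬝ᵥ M *ᵥ (a • x) = a ^ 2 * (x ⬝ᵥ M *ᵥ x) := by
  simp [smul_dotProduct, dotProduct_smul, mulVec_smul, smul_eq_mul]
  ring

lemma posdef_perturb {n : ℕ} (M B : Matrix (Fin n) (Fin n) ℝ)
    (hM : M.PosDef) (hB : B.IsSymm) :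
    ∃ ε : ℝ, 0 < ε ∧ (M + ε • B).PosSemidef := by
  rcases Nat.eq_zero_or_pos n with hn | hn
  · refine ⟨1, one_pos, .of_dotProduct_mulVec_nonneg (hM.isHermitian.add (herm_of_symm (hB.smul 1))) fun x => ?_⟩
    subst hn
    have : x = 0 := Subsingleton.elim _ _
    simp [this]
  · haveI : Nonempty (Fin n) := Fin.pos_iff_nonempty.mp hn
    have hsne : (Metric.sphere (0 : Fin n → ℝ) 1).Nonempty :=
      NormedSpace.sphere_nonempty.mpr zero_le_one
    obtain ⟨u₀, hu₀, hmin⟩ := (isCompact_sphere (0 : Fin n → ℝ) 1).exists_isMinOn hsne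
      (quad_cont M).continuousOn
    obtain ⟨u₁, hu₁, hmax⟩ := (isCompact_sphere (0 : Fin n → ℝ) 1).exists_isMaxOn hsne
      ((quad_cont B).abs.continuousOn)
    set c : ℝ := u₀ ⬝ᵥ M *ᵥ u₀ with hc
    set b : ℝ := |u₁ ⬝ᵥ B *ᵥ u₁| with hb
    have hu₀ne : u₀ ≠ 0 := by
      intro h
      have := mem_sphere_zero_iff_norm.mp hu₀
      rw [h] at this; simp at this
    have hcpos : 0 < c := by
      have := hM.dotProduct_mulVec_pos hu₀ne
      simpa using this
    have hbnn : 0 ≤ b := abs_nonneg _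
    refine ⟨c / (b + 1), div_pos hcpos (by linarith), ?_⟩
    refine .of_dotProduct_mulVec_nonneg (hM.isHermitian.add (herm_of_symm (hB.smul _))) fun x => ?_
    rcases eq_or_ne x 0 with rfl | hx
    · simp
    · set r : ℝ := ‖x‖ with hr
      have hrpos : 0 < r := norm_pos_iff.mpr hx
      set u : Fin n → ℝ := r⁻¹ • x with hu
      have hxu : x = r • u := by
        rw [hu, smul_inv_smul₀ hrpos.ne']
      have husphere : u ∈ Metric.sphere (0 : Fin n → ℝ) 1 := by
        rw [mem_sphere_zero_iff_norm, hu, norm_smul, Real.norm_eq_abs, abs_inv,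
          abs_of_pos hrpos]
        exact inv_mul_cancel₀ hrpos.ne'
      have h1 : c ≤ u ⬝ᵥ M *ᵥ u := hmin husphere
      have h2 : |u ⬝ᵥ B *ᵥ u| ≤ b := hmax husphere
      have key : 0 ≤ u ⬝ᵥ M *ᵥ u + c / (b + 1) * (u ⬝ᵥ B *ᵥ u) := by
        have habs := abs_le.mp h2
        have hεb : c / (b + 1) * (b + 1) = c := by field_simp
        nlinarith [div_pos hcpos (show (0:ℝ) < b + 1 by linarith)]
      have hqM : x ⬝ᵥ M *ᵥ x = r ^ 2 * (u ⬝ᵥ M *ᵥ u) := by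
        conv_lhs => rw [hxu]
        exact quad_smul M r u
      have hqB : x ⬝ᵥ B *ᵥ x = r ^ 2 * (u ⬝ᵥ B *ᵥ u) := by
        conv_lhs => rw [hxu]
        exact quad_smul B r u
      have expand : (star x) ⬝ᵥ (M + (c / (b + 1)) • B) *ᵥ x
          = r ^ 2 * (u ⬝ᵥ M *ᵥ u + c / (b + 1) * (u ⬝ᵥ B *ᵥ u)) := by
        rw [star_trivial, add_mulVec, dotProduct_add, smul_mulVec,
          dotProduct_smul, smul_eq_mul, hqM, hqB]
        ring
      rw [expand]
      positivity

/-- if `I_≽(A,B)` is a single-point set then `B` is indefinite and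
`I_≻(A,B) = ∅`. -/
theorem stmt_4 {n : ℕ} (A B : Matrix (Fin n) (Fin n) ℝ)
    (hA : A.IsSymm) (hB : B.IsSymm) (σ₀ : ℝ)
    (hsingle : {σ : ℝ | (A + σ • B).PosSemidef} = {σ₀}) :
    ((∃ v₁ : Fin n → ℝ, 0 < v₁ ⬝ᵥ B *ᵥ v₁) ∧ (∃ v₂ : Fin n → ℝ, v₂ ⬝ᵥ B *ᵥ v₂ < 0)) ∧
    ∀ σ : ℝ, ¬ (A + σ • B).PosDef := by
  have hBh : B.IsHermitian := herm_of_symm hB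
  have hmem : ∀ σ : ℝ, (A + σ • B).PosSemidef ↔ σ = σ₀ := by
    intro σ
    constructor
    · intro h
      have : σ ∈ ({σ₀} : Set ℝ) := hsingle ▸ h
      simpa using this
    · rintro rfl
      have : σ ∈ ({σ} : Set ℝ) := rfl
      rw [← hsingle] at this
      exact this
  have hM0 : (A + σ₀ • B).PosSemidef := (hmem σ₀).mpr rfl
  refine ⟨⟨?_, ?_⟩, ?_⟩
  · -- exists v₁ with positive quadratic form
    by_contra h
    push_neg at h
    have hnegB : (-B).PosSemidef := by
      refine .of_dotProduct_mulVec_nonneg hBh.neg fun x => ?_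
      rw [star_trivial, neg_mulVec, dotProduct_neg]
      linarith [h x]
    have : (A + (σ₀ - 1) • B).PosSemidef := by
      have := hM0.add hnegB
      have heq : A + σ₀ • B + -B = A + (σ₀ - 1) • B := by
        rw [sub_smul, one_smul]
        abel
      rwa [heq] at this
    have := (hmem _).mp this
    linarith
  · -- exists v₂ with negative quadratic form
    by_contra h
    push_neg at h
    have hposB : B.PosSemidef := by
      refine .of_dotProduct_mulVec_nonneg hBh fun x => ?_
      simpa using h x
    have : (A + (σ₀ + 1) • B).PosSemidef := by
      have := hM0.add hposB
      have heq : A + σ₀ • B + B = A + (σ₀ + 1) • B := by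
        rw [add_smul, one_smul]
        abel
      rwa [heq] at this
    have := (hmem _).mp this
    linarith
  · intro σ hpd
    have hσ : σ = σ₀ := (hmem σ).mp hpd.posSemidef
    subst hσ
    obtain ⟨ε, hε, hperturb⟩ := posdef_perturb (A + σ • B) B hpd hB
    have : (A + (σ + ε) • B).PosSemidef := by
      have heq : A + σ • B + ε • B = A + (σ + ε) • B := by
        rw [add_smul]; abel
      rwa [heq] at hperturb
    have := (hmem _).mp this
    linarith
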